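/- Let A⁺, A⁻ ⊆ ℝⁿ be disjoint finite sets with A⁺ ≠ ∅ and A⁻ ≠ ∅, and set A = A⁺ ∪ A⁻. For each β ∈ A⁻ let C^A_{(A⁺,{β})} denote the set of vectors in ℝ^A that vanish on A⁻ \ {β} and whose restriction to A⁺ ∪ {β} belongs to C_{(A⁺,{β})}. Then the dual cone of C_{(A⁺,A⁻)} equals the intersection over β ∈ A⁻ of the dual cones of C^A_{(A⁺,{β})}. -/

import Mathlib

open Finset

/-- The exponential sum with support `A` and coefficient vector `v`. -/
noncomputable def expSum {n : ℕ} (A : Finset (Fin n → ℝ)) (v : (Fin n → ℝ) → ℝ)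
    (x : Fin n → ℝ) : ℝ :=
  ∑ γ ∈ A, v γ * Real.exp (∑ i, x i * γ i)

/-- The signed SONC (= SAGE) cone `C_{(A⁺,A⁻)}`. -/
def InSAGE {n : ℕ} (Ap An : Finset (Fin n → ℝ)) (c : (Fin n → ℝ) → ℝ) : Prop :=
  (∀ α ∈ Ap, 0 ≤ c α) ∧ (∀ β ∈ An, c β ≤ 0) ∧
  ∃ (m : ℕ) (d : Fin m → (Fin n → ℝ) → ℝ),
    (∀ γ ∈ Ap ∪ An, c γ = ∑ i, d i γ) ∧
    (∀ i, ∀ γ₁ ∈ Ap ∪ An, ∀ γ₂ ∈ Ap ∪ An, d i γ₁ < 0 → d i γ₂ < 0 → γ₁ = γ₂) ∧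
    (∀ i, ∀ x : Fin n → ℝ, 0 ≤ expSum (Ap ∪ An) (d i) x)

/-- `C^A_{(A⁺,{β})}`: vectors on `A = A⁺ ∪ A⁻` vanishing on `A⁻ \ {β}` whose restriction to
`A⁺ ∪ {β}` lies in `C_{(A⁺,{β})}`. -/
def SAGEExt {n : ℕ} (Ap An : Finset (Fin n → ℝ)) (β : Fin n → ℝ) :
    Set ((Fin n → ℝ) → ℝ) :=
  {c | (∀ γ ∈ An, γ ≠ β → c γ = 0) ∧ InSAGE Ap {β} c}

/-- The dual cone of a set `K` of coefficient vectors on the support `A`, with respect to the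
natural duality pairing. -/
def dualCone {n : ℕ} (A : Finset (Fin n → ℝ)) (K : Set ((Fin n → ℝ) → ℝ)) :
    Set ((Fin n → ℝ) → ℝ) :=
  {v | ∀ c ∈ K, 0 ≤ ∑ γ ∈ A, v γ * c γ}

namespace SageAux

variable {n : ℕ}

def AGEon (A : Finset (Fin n → ℝ)) (d : (Fin n → ℝ) → ℝ) : Prop :=
  (∀ γ₁ ∈ A, ∀ γ₂ ∈ A, d γ₁ < 0 → d γ₂ < 0 → γ₁ = γ₂) ∧ ∀ x, 0 ≤ expSum A d x

def Inv (A S T : Finset (Fin n → ℝ)) (d : (Fin n → ℝ) → ℝ) : Prop :=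
  AGEon A d ∧ (∀ γ ∈ S, d γ ≤ 0) ∧ (∀ γ ∈ T, 0 ≤ d γ)

def mtotal (M : Multiset ((Fin n → ℝ) → ℝ)) (γ : Fin n → ℝ) : ℝ :=
  (M.map (fun d => d γ)).sum

lemma expSum_comb (A : Finset (Fin n → ℝ)) (r g : (Fin n → ℝ) → ℝ) (s : ℝ) (x : Fin n → ℝ) :
    expSum A (fun γ => r γ + s * g γ) x = expSum A r x + s * expSum A g x := by
  simp only [expSum, Finset.mul_sum]
  rw [← Finset.sum_add_distrib]
  exact Finset.sum_congr rfl fun γ _ => by ring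

lemma expSum_smul (A : Finset (Fin n → ℝ)) (g : (Fin n → ℝ) → ℝ) (s : ℝ) (x : Fin n → ℝ) :
    expSum A (fun γ => s * g γ) x = s * expSum A g x := by
  simp only [expSum, Finset.mul_sum]
  exact Finset.sum_congr rfl fun γ _ => by ring

lemma step (A S T : Finset (Fin n → ℝ)) (p : Fin n → ℝ) (hpA : p ∈ A)
    (r g : (Fin n → ℝ) → ℝ) (hr : Inv A S T r) (hg : Inv A S T g)
    (hrp : 0 < r p) (hgp : g p < 0) :
    ∃ r' g' : (Fin n → ℝ) → ℝ, Inv A S T r' ∧ Inv A S T g' ∧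
      (∀ γ, r' γ + g' γ = r γ + g γ) ∧ (r' p = 0 ∨ g' p = 0) := by
  set s : ℝ := min (r p / (-(g p))) 1 with hs
  have hgp' : 0 < -g p := by linarith
  have hs0 : 0 ≤ s := le_min (by positivity) zero_le_one
  have hs1 : s ≤ 1 := min_le_right _ _
  have h1s : 0 ≤ 1 - s := by linarith
  have hrp' : 0 ≤ r p + s * g p := by
    have h2 : s ≤ r p / (-g p) := min_le_left _ _
    have h3 : s * (-g p) ≤ r p := (le_div_iff₀ hgp').mp h2
    nlinarith
  -- g is nonnegative on A away from p
  have hgA : ∀ γ ∈ A, γ ≠ p → 0 ≤ g γ := by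
    intro γ hγA hne
    by_contra hgc
    push_neg at hgc
    exact hne (hg.1.1 γ hγA p hpA hgc hgp)
  refine ⟨fun γ => r γ + s * g γ, fun γ => (1 - s) * g γ, ?_, ?_, fun γ => by ring, ?_⟩
  · refine ⟨⟨?_, ?_⟩, ?_, ?_⟩
    · intro γ₁ h1 γ₂ h2 hn1 hn2
      have key : ∀ γ ∈ A, r γ + s * g γ < 0 → r γ < 0 := by
        intro γ hγA hlt
        have hne : γ ≠ p := by
          intro hE; rw [hE] at hlt; linarith
        have := hgA γ hγA hne
        nlinarith
      exact hr.1.1 γ₁ h1 γ₂ h2 (key γ₁ h1 hn1) (key γ₂ h2 hn2)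
    · intro x
      rw [expSum_comb]
      have := hr.1.2 x
      have := hg.1.2 x
      nlinarith
    · intro γ hγ
      have h1 := hr.2.1 γ hγ
      have h2 := hg.2.1 γ hγ
      show r γ + s * g γ ≤ 0
      nlinarith [mul_nonneg hs0 (neg_nonneg.mpr h2)]
    · intro γ hγ
      have h1 := hr.2.2 γ hγ
      have h2 := hg.2.2 γ hγ
      show 0 ≤ r γ + s * g γ
      nlinarith [mul_nonneg hs0 h2]
  · refine ⟨⟨?_, ?_⟩, ?_, ?_⟩
    · intro γ₁ h1 γ₂ h2 hn1 hn2
      have key : ∀ γ, (1 - s) * g γ < 0 → g γ < 0 := by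
        intro γ hlt
        by_contra hcon
        push_neg at hcon
        nlinarith
      exact hg.1.1 γ₁ h1 γ₂ h2 (key γ₁ hn1) (key γ₂ hn2)
    · intro x
      rw [expSum_smul]
      exact mul_nonneg h1s (hg.1.2 x)
    · intro γ hγ
      have h2 := hg.2.1 γ hγ
      show (1 - s) * g γ ≤ 0
      nlinarith [mul_nonneg h1s (neg_nonneg.mpr h2)]
    · intro γ hγ
      have h2 := hg.2.2 γ hγ
      show 0 ≤ (1 - s) * g γ
      exact mul_nonneg h1s h2
  · rcases le_or_gt (r p / (-g p)) 1 with h | h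
    · left
      have hE : s = r p / (-g p) := min_eq_left h
      have hne : -g p ≠ 0 := ne_of_gt hgp'
      rw [hE]
      field_simp
      rw [div_self (neg_ne_zero.mp hne)]
      ring
    · right
      have hE : s = 1 := min_eq_right h.le
      rw [hE]
      ring

lemma stage_le (A S T : Finset (Fin n → ℝ)) (p : Fin n → ℝ) (hpA : p ∈ A) :
    ∀ (k : ℕ) (M : Multiset ((Fin n → ℝ) → ℝ)),
      Multiset.card (M.filter (fun d => d p ≠ 0)) ≤ k →
      (∀ d ∈ M, Inv A S T d) → mtotal M p ≤ 0 →
      ∃ M', (∀ d ∈ M', Inv A S T d ∧ d p ≤ 0) ∧ ∀ γ, mtotal M' γ = mtotal M γ := by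
  classical
  intro k
  induction k with
  | zero =>
    intro M hcard hinv htot
    refine ⟨M, ?_, fun γ => rfl⟩
    intro d hd
    refine ⟨hinv d hd, ?_⟩
    by_contra hcon
    push_neg at hcon
    have hmem : d ∈ M.filter (fun d => d p ≠ 0) :=
      Multiset.mem_filter.mpr ⟨hd, ne_of_gt hcon⟩
    have : 0 < Multiset.card (M.filter (fun d => d p ≠ 0)) :=
      Multiset.card_pos_iff_exists_mem.mpr ⟨d, hmem⟩
    exact absurd (this.trans_le hcard) (lt_irrefl 0)
  | succ k ih =>
    intro M hcard hinv htot
    by_cases hall : ∀ d ∈ M, d p ≤ 0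
    · exact ⟨M, fun d hd => ⟨hinv d hd, hall d hd⟩, fun γ => rfl⟩
    · push_neg at hall
      obtain ⟨f, hfM, hfp⟩ := hall
      obtain ⟨g, hgM, hgp⟩ : ∃ g ∈ M, g p < 0 := by
        by_contra hc
        push_neg at hc
        have h1 : mtotal M p = f p + mtotal (M.erase f) p := by
          conv_lhs => rw [(Multiset.cons_erase hfM).symm]
          simp [mtotal]
        have h2 : 0 ≤ mtotal (M.erase f) p := by
          apply Multiset.sum_nonneg
          intro x hx
          obtain ⟨d, hd, rfl⟩ := Multiset.mem_map.mp hx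
          exact hc d (Multiset.mem_of_mem_erase hd)
        linarith
      have hgf : g ≠ f := by
        intro h; rw [h] at hgp; linarith
      have hgM1 : g ∈ M.erase f := (Multiset.mem_erase_of_ne hgf).mpr hgM
      obtain ⟨R, hMR⟩ : ∃ R, M = f ::ₘ g ::ₘ R := by
        refine ⟨(M.erase f).erase g, ?_⟩
        rw [Multiset.cons_erase hgM1, Multiset.cons_erase hfM]
      have hRM : ∀ d ∈ R, d ∈ M := by
        intro d hd
        rw [hMR]
        exact Multiset.mem_cons_of_mem (Multiset.mem_cons_of_mem hd)
      obtain ⟨r', g', hr', hg', hsum, hzero⟩ :=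
        step A S T p hpA f g (hinv f hfM) (hinv g hgM) hfp hgp
      have hinv' : ∀ d ∈ (r' ::ₘ g' ::ₘ R), Inv A S T d := by
        intro d hd
        rcases Multiset.mem_cons.mp hd with h | hd
        · rwa [h]
        rcases Multiset.mem_cons.mp hd with h | hd
        · rwa [h]
        · exact hinv d (hRM d hd)
      have htoteq : ∀ γ, mtotal (r' ::ₘ g' ::ₘ R) γ = mtotal M γ := by
        intro γ
        rw [hMR]
        simp only [mtotal, Multiset.map_cons, Multiset.sum_cons]
        have := hsum γ
        linarith
      have hcard' : Multiset.card ((r' ::ₘ g' ::ₘ R).filter (fun d => d p ≠ 0)) ≤ k := by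
        have e1 : f p ≠ 0 := ne_of_gt hfp
        have e2 : g p ≠ 0 := ne_of_lt hgp
        have hMcard : Multiset.card (M.filter (fun d => d p ≠ 0))
            = Multiset.card (R.filter (fun d => d p ≠ 0)) + 2 := by
          rw [hMR]
          simp only [Multiset.filter_cons]
          rw [if_pos e1, if_pos e2]
          simp [Multiset.card_add]
        have hM'card : Multiset.card ((r' ::ₘ g' ::ₘ R).filter (fun d => d p ≠ 0))
            ≤ Multiset.card (R.filter (fun d => d p ≠ 0)) + 1 := by
          simp only [Multiset.filter_cons]
          rcases hzero with h | h
          · rw [if_neg (by simp [h])]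
            split_ifs <;> simp [Multiset.card_add]
          · rw [if_neg (show ¬ g' p ≠ 0 by simp [h])]
            split_ifs <;> simp [Multiset.card_add]
        linarith
      obtain ⟨M'', hfin, htot''⟩ := ih (r' ::ₘ g' ::ₘ R) hcard' hinv'
        (by rw [htoteq]; exact htot)
      exact ⟨M'', hfin, fun γ => (htot'' γ).trans (htoteq γ)⟩

lemma stage_ge (A S T : Finset (Fin n → ℝ)) (p : Fin n → ℝ) (hpA : p ∈ A) :
    ∀ (k : ℕ) (M : Multiset ((Fin n → ℝ) → ℝ)),
      Multiset.card (M.filter (fun d => d p ≠ 0)) ≤ k →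
      (∀ d ∈ M, Inv A S T d) → 0 ≤ mtotal M p →
      ∃ M', (∀ d ∈ M', Inv A S T d ∧ 0 ≤ d p) ∧ ∀ γ, mtotal M' γ = mtotal M γ := by
  classical
  intro k
  induction k with
  | zero =>
    intro M hcard hinv htot
    refine ⟨M, ?_, fun γ => rfl⟩
    intro d hd
    refine ⟨hinv d hd, ?_⟩
    by_contra hcon
    push_neg at hcon
    have hmem : d ∈ M.filter (fun d => d p ≠ 0) :=
      Multiset.mem_filter.mpr ⟨hd, ne_of_lt hcon⟩
    have : 0 < Multiset.card (M.filter (fun d => d p ≠ 0)) :=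
      Multiset.card_pos_iff_exists_mem.mpr ⟨d, hmem⟩
    exact absurd (this.trans_le hcard) (lt_irrefl 0)
  | succ k ih =>
    intro M hcard hinv htot
    by_cases hall : ∀ d ∈ M, 0 ≤ d p
    · exact ⟨M, fun d hd => ⟨hinv d hd, hall d hd⟩, fun γ => rfl⟩
    · push_neg at hall
      obtain ⟨f, hfM, hfp⟩ := hall
      obtain ⟨g, hgM, hgp⟩ : ∃ g ∈ M, 0 < g p := by
        by_contra hc
        push_neg at hc
        have h1 : mtotal M p = f p + mtotal (M.erase f) p := by
          conv_lhs => rw [(Multiset.cons_erase hfM).symm]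
          simp [mtotal]
        have h2 : mtotal (M.erase f) p ≤ 0 := by
          have hneg : 0 ≤ ((M.erase f).map (fun d => -(d p))).sum := by
            apply Multiset.sum_nonneg
            intro x hx
            obtain ⟨d, hd, rfl⟩ := Multiset.mem_map.mp hx
            simpa using hc d (Multiset.mem_of_mem_erase hd)
          have hnn : ((M.erase f).map (fun d => -(d p))).sum
              = -((M.erase f).map (fun d => d p)).sum := by
            rw [← Multiset.sum_map_neg', Multiset.map_map]
            rfl
          simp only [mtotal]
          rw [hnn] at hneg
          linarith
        linarith
      have hgf : g ≠ f := by
        intro h; rw [h] at hgp; linarith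
      have hgM1 : g ∈ M.erase f := (Multiset.mem_erase_of_ne hgf).mpr hgM
      obtain ⟨R, hMR⟩ : ∃ R, M = f ::ₘ g ::ₘ R := by
        refine ⟨(M.erase f).erase g, ?_⟩
        rw [Multiset.cons_erase hgM1, Multiset.cons_erase hfM]
      have hRM : ∀ d ∈ R, d ∈ M := by
        intro d hd
        rw [hMR]
        exact Multiset.mem_cons_of_mem (Multiset.mem_cons_of_mem hd)
      obtain ⟨r', g', hr', hg', hsum, hzero⟩ :=
        step A S T p hpA g f (hinv g hgM) (hinv f hfM) hgp hfp
      have hinv' : ∀ d ∈ (r' ::ₘ g' ::ₘ R), Inv A S T d := by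
        intro d hd
        rcases Multiset.mem_cons.mp hd with h | hd
        · rwa [h]
        rcases Multiset.mem_cons.mp hd with h | hd
        · rwa [h]
        · exact hinv d (hRM d hd)
      have htoteq : ∀ γ, mtotal (r' ::ₘ g' ::ₘ R) γ = mtotal M γ := by
        intro γ
        rw [hMR]
        simp only [mtotal, Multiset.map_cons, Multiset.sum_cons]
        have := hsum γ
        linarith
      have hcard' : Multiset.card ((r' ::ₘ g' ::ₘ R).filter (fun d => d p ≠ 0)) ≤ k := by
        have e1 : f p ≠ 0 := ne_of_lt hfp
        have e2 : g p ≠ 0 := ne_of_gt hgp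
        have hMcard : Multiset.card (M.filter (fun d => d p ≠ 0))
            = Multiset.card (R.filter (fun d => d p ≠ 0)) + 2 := by
          rw [hMR]
          simp only [Multiset.filter_cons]
          rw [if_pos e1, if_pos e2]
          simp [Multiset.card_add]
        have hM'card : Multiset.card ((r' ::ₘ g' ::ₘ R).filter (fun d => d p ≠ 0))
            ≤ Multiset.card (R.filter (fun d => d p ≠ 0)) + 1 := by
          simp only [Multiset.filter_cons]
          rcases hzero with h | h
          · rw [if_neg (by simp [h])]
            split_ifs <;> simp [Multiset.card_add]
          · rw [if_neg (show ¬ g' p ≠ 0 by simp [h])]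
            split_ifs <;> simp [Multiset.card_add]
        linarith
      obtain ⟨M'', hfin, htot''⟩ := ih (r' ::ₘ g' ::ₘ R) hcard' hinv'
        (by rw [htoteq]; exact htot)
      exact ⟨M'', hfin, fun γ => (htot'' γ).trans (htoteq γ)⟩

lemma phase1 (A An T : Finset (Fin n → ℝ)) (hAnA : An ⊆ A) (hAnT : ∀ β ∈ An, β ∉ T) :
    ∀ S : Finset (Fin n → ℝ), S ⊆ An →
      ∀ M : Multiset ((Fin n → ℝ) → ℝ), (∀ d ∈ M, Inv A ∅ T d) →
      (∀ β ∈ An, mtotal M β ≤ 0) →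
      ∃ M', (∀ d ∈ M', Inv A S T d) ∧ ∀ γ, mtotal M' γ = mtotal M γ := by
  intro S
  induction S using Finset.induction_on with
  | empty =>
    intro _ M hinv htot
    refine ⟨M, ?_, fun γ => rfl⟩
    intro d hd
    exact ⟨(hinv d hd).1, fun γ hγ => absurd hγ (Finset.notMem_empty γ), (hinv d hd).2.2⟩
  | insert a S ha iha =>
    intro hsub M hinv htot
    have haAn : a ∈ An := hsub (Finset.mem_insert_self a S)
    have hSub : S ⊆ An := fun x hx => hsub (Finset.mem_insert_of_mem hx)
    obtain ⟨M₁, hinv₁, htot₁⟩ := iha hSub M hinv htot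
    obtain ⟨M₂, hinv₂, htot₂⟩ := stage_le A S T a (hAnA haAn)
      (Multiset.card (M₁.filter (fun d => d a ≠ 0))) M₁ le_rfl hinv₁
      (by rw [htot₁]; exact htot a haAn)
    refine ⟨M₂, ?_, fun γ => (htot₂ γ).trans (htot₁ γ)⟩
    intro d hd
    obtain ⟨⟨hage, hS, hT⟩, hda⟩ := hinv₂ d hd
    refine ⟨hage, ?_, hT⟩
    intro γ hγ
    rcases Finset.mem_insert.mp hγ with h | h
    · rwa [h]
    · exact hS γ h

lemma phase2 (A An Ap : Finset (Fin n → ℝ)) (hApA : Ap ⊆ A) (hApAn : ∀ α ∈ Ap, α ∉ An) :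
    ∀ T : Finset (Fin n → ℝ), T ⊆ Ap →
      ∀ M : Multiset ((Fin n → ℝ) → ℝ), (∀ d ∈ M, Inv A An ∅ d) →
      (∀ α ∈ Ap, 0 ≤ mtotal M α) →
      ∃ M', (∀ d ∈ M', Inv A An T d) ∧ ∀ γ, mtotal M' γ = mtotal M γ := by
  intro T
  induction T using Finset.induction_on with
  | empty =>
    intro _ M hinv htot
    refine ⟨M, ?_, fun γ => rfl⟩
    intro d hd
    exact ⟨(hinv d hd).1, (hinv d hd).2.1, fun γ hγ => absurd hγ (Finset.notMem_empty γ)⟩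
  | insert a T ha iha =>
    intro hsub M hinv htot
    have haAp : a ∈ Ap := hsub (Finset.mem_insert_self a T)
    have hSub : T ⊆ Ap := fun x hx => hsub (Finset.mem_insert_of_mem hx)
    obtain ⟨M₁, hinv₁, htot₁⟩ := iha hSub M hinv htot
    obtain ⟨M₂, hinv₂, htot₂⟩ := stage_ge A An T a (hApA haAp)
      (Multiset.card (M₁.filter (fun d => d a ≠ 0))) M₁ le_rfl hinv₁
      (by rw [htot₁]; exact htot a haAp)
    refine ⟨M₂, ?_, fun γ => (htot₂ γ).trans (htot₁ γ)⟩
    intro d hd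
    obtain ⟨⟨hage, hS, hT⟩, hda⟩ := hinv₂ d hd
    refine ⟨hage, hS, ?_⟩
    intro γ hγ
    rcases Finset.mem_insert.mp hγ with h | h
    · rwa [h]
    · exact hT γ h

lemma sageExt_zero (Ap An : Finset (Fin n → ℝ)) (β : Fin n → ℝ) :
    (fun _ : Fin n → ℝ => (0:ℝ)) ∈ SAGEExt Ap An β := by
  refine ⟨fun γ _ _ => rfl, fun α _ => le_refl 0, fun β' _ => le_refl 0, 0, fun i => i.elim0,
    ?_, fun i => i.elim0, fun i => i.elim0⟩
  intro γ _
  simp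

lemma sageExt_add {Ap An : Finset (Fin n → ℝ)} {β : Fin n → ℝ} {c₁ c₂ : (Fin n → ℝ) → ℝ}
    (h₁ : c₁ ∈ SAGEExt Ap An β) (h₂ : c₂ ∈ SAGEExt Ap An β) :
    (fun γ => c₁ γ + c₂ γ) ∈ SAGEExt Ap An β := by
  obtain ⟨hvan₁, hp₁, hn₁, m₁, d₁, hs₁, hu₁, he₁⟩ := h₁
  obtain ⟨hvan₂, hp₂, hn₂, m₂, d₂, hs₂, hu₂, he₂⟩ := h₂
  refine ⟨fun γ hγ hne => by show c₁ γ + c₂ γ = 0; rw [hvan₁ γ hγ hne, hvan₂ γ hγ hne, add_zero],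
    fun α hα => add_nonneg (hp₁ α hα) (hp₂ α hα),
    fun β' hβ' => add_nonpos (hn₁ β' hβ') (hn₂ β' hβ'),
    m₁ + m₂, Fin.addCases d₁ d₂, ?_, ?_, ?_⟩
  · intro γ hγ
    rw [Fin.sum_univ_add]
    simp only [Fin.addCases_left, Fin.addCases_right]
    rw [hs₁ γ hγ, hs₂ γ hγ]
  · intro i
    refine Fin.addCases ?_ ?_ i
    · intro j
      simp only [Fin.addCases_left]
      exact hu₁ j
    · intro j
      simp only [Fin.addCases_right]
      exact hu₂ j
  · intro i
    refine Fin.addCases ?_ ?_ i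
    · intro j x
      have : expSum (Ap ∪ {β}) (Fin.addCases (motive := fun _ => (Fin n → ℝ) → ℝ) d₁ d₂
          (Fin.castAdd m₂ j)) x = expSum (Ap ∪ {β}) (d₁ j) x := by
        unfold expSum
        exact Finset.sum_congr rfl fun γ _ => by rw [Fin.addCases_left]
      rw [this]
      exact he₁ j x
    · intro j x
      have : expSum (Ap ∪ {β}) (Fin.addCases (motive := fun _ => (Fin n → ℝ) → ℝ) d₁ d₂
          (Fin.natAdd m₁ j)) x = expSum (Ap ∪ {β}) (d₂ j) x := by
        unfold expSum
        exact Finset.sum_congr rfl fun γ _ => by rw [Fin.addCases_right]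
      rw [this]
      exact he₂ j x

lemma sageExt_single {Ap An : Finset (Fin n → ℝ)} {β : Fin n → ℝ} {d : (Fin n → ℝ) → ℝ}
    (hβ : β ∈ An) (hage : AGEon (Ap ∪ An) d) (hn : ∀ γ ∈ An, d γ ≤ 0)
    (hp : ∀ γ ∈ Ap, 0 ≤ d γ) (hvan : ∀ γ ∈ An, γ ≠ β → d γ = 0) :
    d ∈ SAGEExt Ap An β := by
  have hsub : Ap ∪ {β} ⊆ Ap ∪ An := by
    apply Finset.union_subset_union_right
    simpa using hβ
  refine ⟨hvan, hp, fun β' hβ' => ?_, 1, fun _ => d, fun γ _ => (Fin.sum_univ_one (fun _ => d γ)).symm,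
    ?_, ?_⟩
  · rw [Finset.mem_singleton] at hβ'
    rw [hβ']
    exact hn β hβ
  · intro i γ₁ h1 γ₂ h2 hn1 hn2
    have hβ1 : γ₁ = β := by
      rcases Finset.mem_union.mp h1 with h | h
      · exact absurd hn1 (not_lt.mpr (hp γ₁ h))
      · exact Finset.mem_singleton.mp h
    have hβ2 : γ₂ = β := by
      rcases Finset.mem_union.mp h2 with h | h
      · exact absurd hn2 (not_lt.mpr (hp γ₂ h))
      · exact Finset.mem_singleton.mp h
    rw [hβ1, hβ2]
  · intro i x
    have heq : expSum (Ap ∪ {β}) d x = expSum (Ap ∪ An) d x := by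
      unfold expSum
      apply Finset.sum_subset hsub
      intro γ hγ hγ'
      have hγAn : γ ∈ An := by
        rcases Finset.mem_union.mp hγ with h | h
        · exact absurd (Finset.mem_union_left _ h) hγ'
        · exact h
      have hne : γ ≠ β := by
        intro hE
        exact hγ' (Finset.mem_union_right _ (by simp [hE]))
      rw [hvan γ hγAn hne, zero_mul]
    rw [heq]
    exact hage.2 x

lemma grouping (Ap An : Finset (Fin n → ℝ)) (hAn : An.Nonempty) :
    ∀ M : Multiset ((Fin n → ℝ) → ℝ),
      (∀ d ∈ M, AGEon (Ap ∪ An) d ∧ (∀ γ ∈ An, d γ ≤ 0) ∧ (∀ γ ∈ Ap, 0 ≤ d γ)) →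
      ∃ E : (Fin n → ℝ) → ((Fin n → ℝ) → ℝ),
        (∀ β ∈ An, E β ∈ SAGEExt Ap An β) ∧ ∀ γ, (∑ β ∈ An, E β γ) = mtotal M γ := by
  classical
  intro M
  induction M using Multiset.induction_on with
  | empty =>
    intro _
    refine ⟨fun _ _ => 0, fun β hβ => sageExt_zero Ap An β, fun γ => ?_⟩
    simp [mtotal]
  | cons a M ihM =>
    intro h
    have ha := h a (Multiset.mem_cons_self a M)
    obtain ⟨E, hE, hEs⟩ := ihM (fun d hd => h d (Multiset.mem_cons_of_mem hd))
    -- find the assignment point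
    obtain ⟨βs, hβs, hvan⟩ : ∃ βs ∈ An, ∀ γ ∈ An, γ ≠ βs → a γ = 0 := by
      by_cases hex : ∃ β ∈ An, a β < 0
      · obtain ⟨βs, hβs, hlt⟩ := hex
        refine ⟨βs, hβs, fun γ hγ hne => ?_⟩
        rcases lt_or_eq_of_le (ha.2.1 γ hγ) with h' | h'
        · exact absurd (ha.1.1 γ (Finset.mem_union_right _ hγ) βs
            (Finset.mem_union_right _ hβs) h' hlt) hne
        · exact h'
      · push_neg at hex
        refine ⟨hAn.choose, hAn.choose_spec, fun γ hγ _ => ?_⟩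
        exact le_antisymm (ha.2.1 γ hγ) (hex γ hγ)
    have hsingle : a ∈ SAGEExt Ap An βs :=
      sageExt_single hβs ha.1 ha.2.1 ha.2.2 hvan
    set E' : (Fin n → ℝ) → ((Fin n → ℝ) → ℝ) :=
      fun β => if β = βs then (fun γ => E βs γ + a γ) else E β with hE'
    refine ⟨E', ?_, ?_⟩
    · intro β hβ
      by_cases hb : β = βs
      · subst hb
        simp only [hE', if_pos rfl]
        exact sageExt_add (hE β hβ) hsingle
      · simp only [hE', if_neg hb]
        exact hE β hβ
    · intro γ
      have hterm : ∀ β ∈ An, E' β γ = E β γ + (if β = βs then a γ else 0) := by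
        intro β _
        by_cases hb : β = βs
        · subst hb; simp [hE']
        · simp [hE', hb]
      rw [Finset.sum_congr rfl hterm, Finset.sum_add_distrib,
        Finset.sum_ite_eq' An βs (fun _ => a γ), if_pos hβs]
      have : mtotal (a ::ₘ M) γ = a γ + mtotal M γ := by
        simp [mtotal]
      rw [this, hEs γ]
      ring

lemma decomp (Ap An : Finset (Fin n → ℝ)) (hdisj : Disjoint Ap An) (hAn : An.Nonempty)
    {c : (Fin n → ℝ) → ℝ} (hc : InSAGE Ap An c) :
    ∃ E : (Fin n → ℝ) → ((Fin n → ℝ) → ℝ),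
      (∀ β ∈ An, E β ∈ SAGEExt Ap An β) ∧ ∀ γ ∈ Ap ∪ An, c γ = ∑ β ∈ An, E β γ := by
  obtain ⟨hp, hn, m, d, hsum, huniq, hexp⟩ := hc
  set M₀ : Multiset ((Fin n → ℝ) → ℝ) := ↑(List.ofFn d) with hM₀
  have htot₀ : ∀ γ, mtotal M₀ γ = ∑ i, d i γ := by
    intro γ
    simp [mtotal, hM₀, List.map_ofFn, List.sum_ofFn, Function.comp]
  have hmem₀ : ∀ e ∈ M₀, ∃ i, d i = e := by
    intro e he
    rw [hM₀, Multiset.mem_coe, List.mem_ofFn] at he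
    exact he
  have hinv₀ : ∀ e ∈ M₀, Inv (Ap ∪ An) ∅ ∅ e := by
    intro e he
    obtain ⟨i, rfl⟩ := hmem₀ e he
    exact ⟨⟨huniq i, hexp i⟩, fun γ hγ => absurd hγ (Finset.notMem_empty γ),
      fun γ hγ => absurd hγ (Finset.notMem_empty γ)⟩
  obtain ⟨M₁, hinv₁, htot₁⟩ := phase1 (Ap ∪ An) An ∅ Finset.subset_union_right
    (fun β _ => Finset.notMem_empty β) An (le_refl An) M₀ hinv₀
    (by
      intro β hβ
      rw [htot₀ β, ← hsum β (Finset.mem_union_right _ hβ)]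
      exact hn β hβ)
  obtain ⟨M₂, hinv₂, htot₂⟩ := phase2 (Ap ∪ An) An Ap Finset.subset_union_left
    (fun α hα => Finset.disjoint_left.mp hdisj hα) Ap (le_refl Ap) M₁ hinv₁
    (by
      intro α hα
      rw [htot₁ α, htot₀ α, ← hsum α (Finset.mem_union_left _ hα)]
      exact hp α hα)
  obtain ⟨E, hE, hEs⟩ := grouping Ap An hAn M₂
    (fun e he => ⟨(hinv₂ e he).1, (hinv₂ e he).2.1, (hinv₂ e he).2.2⟩)
  refine ⟨E, hE, ?_⟩
  intro γ hγ
  rw [hsum γ hγ, ← htot₀ γ, ← htot₁ γ, ← htot₂ γ, hEs γ]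

lemma sageExt_mem_insage {Ap An : Finset (Fin n → ℝ)} {β : Fin n → ℝ} (hβ : β ∈ An)
    {c : (Fin n → ℝ) → ℝ} (hc : c ∈ SAGEExt Ap An β) : InSAGE Ap An c := by
  classical
  obtain ⟨hvan, hp, hn1, m, d, hs, hu, he⟩ := hc
  have hβ' : β ∈ Ap ∪ ({β} : Finset (Fin n → ℝ)) := Finset.mem_union_right _ (by simp)
  refine ⟨hp, ?_, m, fun i γ => if γ ∈ Ap ∪ ({β} : Finset (Fin n → ℝ)) then d i γ else 0,
    ?_, ?_, ?_⟩
  · intro β' hβ''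
    by_cases hb : β' = β
    · rw [hb]
      exact hn1 β (by simp)
    · rw [hvan β' hβ'' hb]
  · intro γ hγ
    by_cases hg : γ ∈ Ap ∪ ({β} : Finset (Fin n → ℝ))
    · simp only [if_pos hg]
      exact hs γ hg
    · simp only [if_neg hg]
      have hγAn : γ ∈ An := by
        rcases Finset.mem_union.mp hγ with h | h
        · exact absurd (Finset.mem_union_left _ h) hg
        · exact h
      have hne : γ ≠ β := fun hE => hg (hE ▸ hβ')
      rw [hvan γ hγAn hne]
      simp
  · intro i γ₁ h1 γ₂ h2 hn1' hn2'
    have hn1'' : (if γ₁ ∈ Ap ∪ ({β} : Finset (Fin n → ℝ)) then d i γ₁ else 0) < 0 := hn1'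
    have hn2'' : (if γ₂ ∈ Ap ∪ ({β} : Finset (Fin n → ℝ)) then d i γ₂ else 0) < 0 := hn2'
    by_cases hg1 : γ₁ ∈ Ap ∪ ({β} : Finset (Fin n → ℝ))
    · by_cases hg2 : γ₂ ∈ Ap ∪ ({β} : Finset (Fin n → ℝ))
      · rw [if_pos hg1] at hn1''
        rw [if_pos hg2] at hn2''
        exact hu i γ₁ hg1 γ₂ hg2 hn1'' hn2''
      · rw [if_neg hg2] at hn2''
        exact absurd hn2'' (lt_irrefl 0)
    · rw [if_neg hg1] at hn1''
      exact absurd hn1'' (lt_irrefl 0)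
  · intro i x
    have heq : expSum (Ap ∪ An)
        (fun γ => if γ ∈ Ap ∪ ({β} : Finset (Fin n → ℝ)) then d i γ else 0) x
        = expSum (Ap ∪ ({β} : Finset (Fin n → ℝ))) (d i) x := by
      unfold expSum
      rw [← Finset.sum_subset (Finset.union_subset_union_right
        (by simpa using hβ : ({β} : Finset (Fin n → ℝ)) ⊆ An))]
      · exact Finset.sum_congr rfl fun γ hγ => by
          show (if γ ∈ Ap ∪ ({β} : Finset (Fin n → ℝ)) then d i γ else 0) * _ = _
          rw [if_pos hγ]
      · intro γ hγ hγ'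
        show (if γ ∈ Ap ∪ ({β} : Finset (Fin n → ℝ)) then d i γ else 0) * _ = 0
        rw [if_neg hγ', zero_mul]
    rw [heq]
    exact he i x

end SageAux

/-- The dual of the signed SONC cone is the intersection of the duals of the
single-negative-term cones. -/
theorem dual_sage_eq_inter {n : ℕ}
    (Ap An : Finset (Fin n → ℝ)) (hdisj : Disjoint Ap An)
    (hAp : Ap.Nonempty) (hAn : An.Nonempty) :
    dualCone (Ap ∪ An) {c | InSAGE Ap An c}
      = ⋂ β ∈ An, dualCone (Ap ∪ An) (SAGEExt Ap An β) := by

  ext v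
  constructor
  · intro hv
    refine Set.mem_iInter₂.mpr ?_
    intro β hβ c hc
    exact hv c (SageAux.sageExt_mem_insage hβ hc)
  · intro hv
    intro c hc
    obtain ⟨E, hE, hEs⟩ := SageAux.decomp Ap An hdisj hAn hc
    have h1 : ∑ γ ∈ Ap ∪ An, v γ * c γ
        = ∑ β ∈ An, ∑ γ ∈ Ap ∪ An, v γ * E β γ := by
      rw [Finset.sum_comm]
      refine Finset.sum_congr rfl fun γ hγ => ?_
      rw [hEs γ hγ, Finset.mul_sum]
    rw [h1]
    apply Finset.sum_nonneg
    intro β hβ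
    exact Set.mem_iInter₂.mp hv β hβ (E β) (hE β hβ)
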